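/- With w as in the noiseless attention average of unit cluster centers, choosing λ = (log d + log K)/Δ yields ⟨μ_k, w⟩/‖w‖ ≥ 1 − C·(K−1)K^{-1}d^{-1} ≥ 1 − C/d for an absolute constant C, provided (K−1)exp(−λΔ) ≤ 1/2. -/
import Mathlib


open Real
open scoped RealInnerProductSpace

set_option maxHeartbeats 2000000 in
/-- With temperature `λ = (log d + log K)/Δ`, the noiseless attention average `w` of the
cluster centers satisfies `⟨μ_k, w⟩/‖w‖ ≥ 1 − C(K−1)/(Kd) ≥ 1 − C/d` for an absolute
constant `C > 0`, provided `(K−1)exp(−λΔ) ≤ 1/2`. -/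
theorem attention_average_cosine_bound :
    ∃ C : ℝ, 0 < C ∧
      ∀ (d K : ℕ), 1 ≤ d → 1 ≤ K →
      ∀ (Δ lam : ℝ), 0 < Δ → lam = (Real.log d + Real.log K) / Δ →
      ∀ (μ : Fin K → EuclideanSpace ℝ (Fin d)), (∀ i, ‖μ i‖ = 1) →
      ∀ (v : EuclideanSpace ℝ (Fin d)), ‖v‖ = 1 →
      ∀ (k : Fin K), (∀ i, i ≠ k → ⟪v, μ i⟫ + Δ ≤ ⟪v, μ k⟫) →
      ((K : ℝ) - 1) * Real.exp (-(lam * Δ)) ≤ 1 / 2 →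
      (⟪μ k, (∑ i, Real.exp (lam * ⟪v, μ i⟫))⁻¹ •
            (∑ i, Real.exp (lam * ⟪v, μ i⟫) • μ i)⟫ /
          ‖(∑ i, Real.exp (lam * ⟪v, μ i⟫))⁻¹ •
            (∑ i, Real.exp (lam * ⟪v, μ i⟫) • μ i)‖ ≥
        1 - C * ((K : ℝ) - 1) / (K * d)) ∧
      1 - C * ((K : ℝ) - 1) / (K * d) ≥ 1 - C / d := by
  refine ⟨4, by norm_num, ?_⟩
  intro d K hd hK Δ lam hΔ hlam μ hμ v hv k hmarg hhalf
  have hd1 : (1 : ℝ) ≤ d := by exact_mod_cast hd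
  have hK1 : (1 : ℝ) ≤ K := by exact_mod_cast hK
  have hdpos : (0 : ℝ) < d := lt_of_lt_of_le one_pos hd1
  have hKpos : (0 : ℝ) < K := lt_of_lt_of_le one_pos hK1
  have hlam0 : 0 ≤ lam := by
    rw [hlam]
    apply div_nonneg _ hΔ.le
    have h1 := Real.log_nonneg hd1
    have h2 := Real.log_nonneg hK1
    linarith
  have hexp : Real.exp (-(lam * Δ)) = ((K : ℝ) * d)⁻¹ := by
    have hmul : lam * Δ = Real.log d + Real.log K := by
      rw [hlam]; field_simp
    rw [hmul, ← Real.log_mul (ne_of_gt hdpos) (ne_of_gt hKpos),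
      Real.exp_neg, Real.exp_log (by positivity)]
    ring_nf
  set a : Fin K → ℝ := fun i => Real.exp (lam * ⟪v, μ i⟫) with ha
  have hapos : ∀ i, 0 < a i := by
    intro i; rw [ha]; exact Real.exp_pos _
  have hne : (Finset.univ : Finset (Fin K)).Nonempty := by
    refine ⟨k, Finset.mem_univ k⟩
  have hZpos : 0 < ∑ i, a i := Finset.sum_pos (fun i _ => hapos i) hne
  set Z : ℝ := ∑ i, a i with hZ
  set w : EuclideanSpace ℝ (Fin d) := Z⁻¹ • (∑ i, a i • μ i) with hw
  set ε : ℝ := 2 * ((K : ℝ) - 1) * Real.exp (-(lam * Δ)) with hε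
  clear_value a Z w ε
  have hε0 : 0 ≤ ε := by
    rw [hε]
    exact mul_nonneg (by nlinarith) (Real.exp_pos _).le
  have hε1 : ε ≤ 1 := by rw [hε]; linarith
  -- key: each weight for i ≠ k is small
  have hweight : ∀ i, i ≠ k → Z⁻¹ * a i ≤ Real.exp (-(lam * Δ)) := by
    intro i hi
    have hak : a k ≤ Z := by
      rw [hZ]
      exact Finset.single_le_sum (fun j _ => (hapos j).le) (Finset.mem_univ k)
    have h1 : Z⁻¹ * a i ≤ (a k)⁻¹ * a i := by
      apply mul_le_mul_of_nonneg_right _ (hapos i).le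
      exact inv_anti₀ (hapos k) hak
    have h2 : (a k)⁻¹ * a i = Real.exp (lam * ⟪v, μ i⟫ - lam * ⟪v, μ k⟫) := by
      rw [ha]; rw [Real.exp_sub]; ring
    have h3 : lam * ⟪v, μ i⟫ - lam * ⟪v, μ k⟫ ≤ -(lam * Δ) := by
      have := hmarg i hi
      have : ⟪v, μ i⟫ - ⟪v, μ k⟫ ≤ -Δ := by linarith
      nlinarith [hlam0]
    calc Z⁻¹ * a i ≤ (a k)⁻¹ * a i := h1
      _ = Real.exp (lam * ⟪v, μ i⟫ - lam * ⟪v, μ k⟫) := h2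
      _ ≤ Real.exp (-(lam * Δ)) := Real.exp_le_exp.mpr h3
  -- ‖w - μ k‖ ≤ ε
  have hdiff : w - μ k = ∑ i, (Z⁻¹ * a i) • (μ i - μ k) := by
    rw [hw]
    have hzk : μ k = Z⁻¹ • (Z • μ k) := by
      rw [smul_smul, inv_mul_cancel₀ (ne_of_gt hZpos), one_smul]
    calc Z⁻¹ • (∑ i, a i • μ i) - μ k
        = Z⁻¹ • (∑ i, a i • μ i) - Z⁻¹ • (Z • μ k) := by rw [← hzk]
      _ = Z⁻¹ • ((∑ i, a i • μ i) - Z • μ k) := by rw [smul_sub]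
      _ = Z⁻¹ • ((∑ i, a i • μ i) - ∑ i, a i • μ k) := by rw [hZ, Finset.sum_smul]
      _ = Z⁻¹ • (∑ i, (a i • μ i - a i • μ k)) := by rw [Finset.sum_sub_distrib]
      _ = Z⁻¹ • (∑ i, a i • (μ i - μ k)) := by
          congr 1; apply Finset.sum_congr rfl; intro i _; rw [smul_sub]
      _ = ∑ i, (Z⁻¹ * a i) • (μ i - μ k) := by
          rw [Finset.smul_sum]
          apply Finset.sum_congr rfl; intro i _; rw [smul_smul]
  have hnormdiff : ‖w - μ k‖ ≤ ε := by
    rw [hdiff]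
    calc ‖∑ i, (Z⁻¹ * a i) • (μ i - μ k)‖
        ≤ ∑ i, ‖(Z⁻¹ * a i) • (μ i - μ k)‖ := norm_sum_le _ _
      _ = ∑ i, (Z⁻¹ * a i) * ‖μ i - μ k‖ := by
          apply Finset.sum_congr rfl; intro i _
          rw [norm_smul, Real.norm_of_nonneg
            (mul_nonneg (inv_nonneg.mpr hZpos.le) (hapos i).le)]
      _ = ∑ i ∈ Finset.univ.erase k, Z⁻¹ * a i * ‖μ i - μ k‖ := by
          symm
          apply Finset.sum_erase
          rw [sub_self, norm_zero, mul_zero]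
      _ ≤ ∑ i ∈ Finset.univ.erase k, Real.exp (-(lam * Δ)) * 2 := by
          apply Finset.sum_le_sum
          intro i hi
          have hik : i ≠ k := Finset.ne_of_mem_erase hi
          have h1 : ‖μ i - μ k‖ ≤ 2 := by
            calc ‖μ i - μ k‖ ≤ ‖μ i‖ + ‖μ k‖ := norm_sub_le _ _
              _ = 2 := by rw [hμ i, hμ k]; norm_num
          have h2 := hweight i hik
          have h3 : 0 ≤ Z⁻¹ * a i :=
            mul_nonneg (inv_nonneg.mpr hZpos.le) (hapos i).le
          nlinarith [Real.exp_pos (-(lam * Δ)), norm_nonneg (μ i - μ k)]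
      _ = ε := by
          rw [Finset.sum_const, Finset.card_erase_of_mem (Finset.mem_univ k),
            Finset.card_univ, Fintype.card_fin, nsmul_eq_mul, hε]
          have : ((K - 1 : ℕ) : ℝ) = (K : ℝ) - 1 := by
            rw [Nat.cast_sub hK]; norm_num
          rw [this]; ring
  -- inner product and norm bounds
  have hinner : 1 - ε ≤ ⟪μ k, w⟫ := by
    have h1 : ⟪μ k, w - μ k⟫ = ⟪μ k, w⟫ - ⟪μ k, μ k⟫ := inner_sub_right _ _ _
    have h2 : ⟪μ k, μ k⟫ = (1 : ℝ) := by
      rw [real_inner_self_eq_norm_sq, hμ k]; norm_num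
    have h3 : |⟪μ k, w - μ k⟫| ≤ ‖μ k‖ * ‖w - μ k‖ := abs_real_inner_le_norm _ _
    rw [hμ k, one_mul] at h3
    have := abs_le.mp h3
    linarith [this.1]
  have hnlow : 1 - ε ≤ ‖w‖ := by
    have := norm_sub_norm_le (μ k) w
    rw [hμ k, ← norm_neg (μ k - w), neg_sub] at this
    linarith
  have hnhigh : ‖w‖ ≤ 1 + ε := by
    have := norm_le_norm_add_norm_sub' w (μ k)
    rw [hμ k, ← norm_neg (w - μ k)] at this
    have h2 := norm_add_le (μ k) (w - μ k)
    rw [hμ k] at h2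
    calc ‖w‖ = ‖μ k + (w - μ k)‖ := by rw [add_sub_cancel]
      _ ≤ 1 + ‖w - μ k‖ := by rw [← hμ k]; exact norm_add_le _ _
      _ ≤ 1 + ε := by linarith
  -- the final bound
  have hεval : ε = 2 * ((K : ℝ) - 1) / ((K : ℝ) * d) := by
    rw [hε, hexp]; field_simp
  have hgoal1 : ⟪μ k, w⟫ / ‖w‖ ≥ 1 - 2 * ε := by
    rcases le_or_gt (1/2 : ℝ) ε with hc | hc
    · have hq : 0 ≤ ⟪μ k, w⟫ / ‖w‖ :=
        div_nonneg (by linarith) (norm_nonneg w)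
      linarith
    · have hwpos : 0 < ‖w‖ := by linarith
      have h1 : (1 - ε) / (1 + ε) ≤ ⟪μ k, w⟫ / ‖w‖ := by
        apply div_le_div₀ (by linarith [real_inner_le_norm (μ k) w, hμ k, hnhigh])
          (by linarith) hwpos hnhigh
      have h2 : 1 - 2 * ε ≤ (1 - ε) / (1 + ε) := by
        rw [le_div_iff₀ (by linarith)]
        nlinarith
      linarith
  have hq : 1 - 4 * ((K : ℝ) - 1) / ((K : ℝ) * d) = 1 - 2 * ε := by
    rw [hεval]; ring
  constructor
  · rw [ge_iff_le, hq]
    exact hgoal1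
  · rw [ge_iff_le, hq]
    have h2 : 2 * ε ≤ 4 / d := by
      rw [hεval, show (2:ℝ) * (2*((K:ℝ)-1)/((K:ℝ)*d)) = (4*((K:ℝ)-1))/((K:ℝ)*d) by ring,
        div_le_div_iff₀ (by positivity) hdpos]
      nlinarith
    linarith
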